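/- Let Γ and R be finite types, P a probability vector on Γ × R, W : Γ → ℝ, and β > 0. Write P_R r = ∑_γ P (γ, r), P_Γ γ = ∑_r P (γ, r), and for P_R r > 0 set W_R r = (∑_γ P (γ, r) · W γ) / P_R r. Assume ∑_γ P_Γ γ · exp(−β W γ) > 0 and ∑_{r : P_R r > 0} P_R r · exp(−β W_R r) > 0, and define the true and estimated free energy differences ΔF = −β⁻¹ · Real.log (∑_γ P_Γ γ · exp(−β W γ)) and ΔF_est = −β⁻¹ · Real.log (∑_{r : P_R r > 0} P_R r · exp(−β W_R r)). Then ΔF_est ≥ ΔF: the free energy difference estimated from the observed work statistics in a Jarzynski-type experiment always overestimates the true free energy difference. -/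

import Mathlib

open Finset

/-- The free energy difference estimated from the observed (coarse-grained) work
statistics in a Jarzynski-type experiment always overestimates the true free energy
difference: `ΔF_est ≥ ΔF`. -/
theorem estimated_free_energy_ge {Γ R : Type*} [Fintype Γ] [Fintype R]
    (P : Γ × R → ℝ) (hP0 : ∀ s, 0 ≤ P s) (hP1 : ∑ s, P s = 1)
    (W : Γ → ℝ) (β : ℝ) (hβ : 0 < β)
    (hpos1 : 0 < ∑ γ, (∑ r, P (γ, r)) * Real.exp (-β * W γ))
    (hpos2 : 0 < ∑ r ∈ univ.filter (fun r : R => 0 < ∑ γ, P (γ, r)),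
      (∑ γ, P (γ, r)) *
        Real.exp (-β * ((∑ γ, P (γ, r) * W γ) / ∑ γ, P (γ, r)))) :
    -β⁻¹ * Real.log (∑ r ∈ univ.filter (fun r : R => 0 < ∑ γ, P (γ, r)),
        (∑ γ, P (γ, r)) *
          Real.exp (-β * ((∑ γ, P (γ, r) * W γ) / ∑ γ, P (γ, r))))
      ≥ -β⁻¹ * Real.log (∑ γ, (∑ r, P (γ, r)) * Real.exp (-β * W γ)) := by
  have hβinv : (0:ℝ) < β⁻¹ := by positivity
  rw [ge_iff_le, neg_mul, neg_mul, neg_le_neg_iff,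
    mul_le_mul_iff_right₀ hβinv, Real.log_le_log_iff hpos2 hpos1]
  -- suffices: estimated sum ≤ true sum
  calc ∑ r ∈ univ.filter (fun r : R => 0 < ∑ γ, P (γ, r)),
        (∑ γ, P (γ, r)) * Real.exp (-β * ((∑ γ, P (γ, r) * W γ) / ∑ γ, P (γ, r)))
      ≤ ∑ r ∈ univ.filter (fun r : R => 0 < ∑ γ, P (γ, r)),
        ∑ γ, P (γ, r) * Real.exp (-β * W γ) := by
        apply Finset.sum_le_sum
        intro r hr
        rw [Finset.mem_filter] at hr
        have hpr : 0 < ∑ γ, P (γ, r) := hr.2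
        -- Jensen: exp(∑ w γ • x γ) ≤ ∑ w γ * exp (x γ)
        have hJ := convexOn_exp.map_sum_le
          (t := Finset.univ) (w := fun γ => P (γ, r) / ∑ γ', P (γ', r))
          (p := fun γ => -β * W γ)
          (fun γ _ => div_nonneg (hP0 _) hpr.le)
          (by rw [← Finset.sum_div, div_self hpr.ne'])
          (fun γ _ => Set.mem_univ _)
        have harg : ∑ γ, (P (γ, r) / ∑ γ', P (γ', r)) • (-β * W γ)
            = -β * ((∑ γ, P (γ, r) * W γ) / ∑ γ, P (γ, r)) := by
          simp only [smul_eq_mul, div_mul_eq_mul_div]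
          rw [← mul_div_assoc, Finset.mul_sum, ← Finset.sum_div]
          congr 1
          exact Finset.sum_congr rfl fun γ _ => by ring
        rw [harg] at hJ
        calc (∑ γ, P (γ, r)) * Real.exp (-β * ((∑ γ, P (γ, r) * W γ) / ∑ γ, P (γ, r)))
            ≤ (∑ γ, P (γ, r)) * ∑ γ, (P (γ, r) / ∑ γ', P (γ', r)) * Real.exp (-β * W γ) :=
              mul_le_mul_of_nonneg_left hJ hpr.le
          _ = ∑ γ, P (γ, r) * Real.exp (-β * W γ) := by
              rw [Finset.mul_sum]
              apply Finset.sum_congr rfl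
              intro γ _
              field_simp
    _ ≤ ∑ r, ∑ γ, P (γ, r) * Real.exp (-β * W γ) := by
        apply Finset.sum_le_sum_of_subset_of_nonneg (Finset.filter_subset _ _)
        intro r _ _
        exact Finset.sum_nonneg fun γ _ => mul_nonneg (hP0 _) (Real.exp_pos _).le
    _ = ∑ γ, (∑ r, P (γ, r)) * Real.exp (-β * W γ) := by
        rw [Finset.sum_comm]
        exact Finset.sum_congr rfl fun γ _ => by rw [Finset.sum_mul]
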